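/- Let m be a positive integer divisible by 64. Let S be a family of subsets of [m], each of size m/16, and let W be a family of subsets of [m], each of size m/8, such that (i) every B ∈ W contains some A ∈ S as a subset, and (ii) every subset C of [m] of size m/16 is contained in some B ∈ W. Then (C(15m/16, m/16) / C(m/8, m/16)) · |S| + |W| ≥ e^{23m/8960} · C(m, m/16) / C(m/8, m/16), where C(a,b) denotes the binomial coefficient. -/

import Mathlib

namespace DSTAux

/-- top-raising identity: `(n+1-k) * C(n+1,k) = (n+1) * C(n,k)`. -/
lemma top_id (n k : ℕ) : (n + 1 - k) * Nat.choose (n + 1) k = (n + 1) * Nat.choose n k := by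
  have h1 := Nat.add_one_mul_choose_eq n k
  have h2 := Nat.choose_succ_right_eq (n + 1) k
  calc (n + 1 - k) * Nat.choose (n + 1) k = Nat.choose (n + 1) k * (n + 1 - k) := by ring
    _ = Nat.choose (n + 1) (k + 1) * (k + 1) := h2.symm
    _ = Nat.succ n * Nat.choose n k := h1.symm
    _ = (n + 1) * Nat.choose n k := by rw [Nat.succ_eq_add_one]

lemma step_up {n a p q : ℕ} (h : p * (a + 1) ≤ q * (n - a)) :
    p * Nat.choose n a ≤ q * Nat.choose n (a + 1) := by
  have h2 := Nat.choose_succ_right_eq n a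
  have key : p * Nat.choose n a * (a + 1) ≤ q * Nat.choose n (a + 1) * (a + 1) := by
    calc p * Nat.choose n a * (a + 1) = Nat.choose n a * (p * (a + 1)) := by ring
      _ ≤ Nat.choose n a * (q * (n - a)) := Nat.mul_le_mul_left _ h
      _ = q * (Nat.choose n a * (n - a)) := by ring
      _ = q * (Nat.choose n (a + 1) * (a + 1)) := by rw [h2]
      _ = q * Nat.choose n (a + 1) * (a + 1) := by ring
  exact Nat.le_of_mul_le_mul_right key (Nat.succ_pos a)

lemma gain (n p q a : ℕ) : ∀ j, (∀ i, i < j → p * (a + i + 1) ≤ q * (n - (a + i))) →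
    p ^ j * Nat.choose n a ≤ q ^ j * Nat.choose n (a + j)
  | 0, _ => by simp
  | (j+1), h => by
    have ih := gain n p q a j (fun i hi => h i (by omega))
    have hs : p * Nat.choose n (a + j) ≤ q * Nat.choose n (a + j + 1) :=
      step_up (h j (by omega))
    calc p ^ (j+1) * Nat.choose n a = p * (p ^ j * Nat.choose n a) := by ring
      _ ≤ p * (q ^ j * Nat.choose n (a + j)) := Nat.mul_le_mul_left _ ih
      _ = q ^ j * (p * Nat.choose n (a + j)) := by ring
      _ ≤ q ^ j * (q * Nat.choose n (a + j + 1)) := Nat.mul_le_mul_left _ hs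
      _ = q ^ (j+1) * Nat.choose n (a + (j+1)) := by
          rw [show a + (j+1) = a + j + 1 by omega]; ring

lemma Dsum (k : ℕ) : ∀ t, 3 * t ≤ k →
    3 * (∑ j ∈ Finset.range (t+1), Nat.choose k j ^ 2) ≤ 4 * Nat.choose k t ^ 2
  | 0, _ => by simp
  | (t+1), h => by
    have ih := Dsum k t (by omega)
    have h2 : 2 * Nat.choose k t ≤ 1 * Nat.choose k (t + 1) := step_up (by omega)
    have h4 : 4 * Nat.choose k t ^ 2 ≤ Nat.choose k (t+1) ^ 2 := by
      have := Nat.mul_le_mul h2 h2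
      nlinarith [this]
    rw [Finset.sum_range_succ]
    have := Finset.sum_range_succ (fun j => Nat.choose k j ^ 2) t
    omega

lemma choose_sq_le (k t : ℕ) : Nat.choose k t ^ 2 ≤ Nat.choose (2*k) (2*t) := by
  have hv := Nat.add_choose_eq k k (2*t)
  have hmem : ((t, t) : ℕ × ℕ) ∈ Finset.HasAntidiagonal.antidiagonal (2*t) := by
    simp [Finset.HasAntidiagonal.mem_antidiagonal]; omega
  have hs : Nat.choose k t * Nat.choose k t ≤
      ∑ ij ∈ Finset.HasAntidiagonal.antidiagonal (2*t), Nat.choose k ij.1 * Nat.choose k ij.2 :=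
    Finset.single_le_sum (f := fun ij => Nat.choose k ij.1 * Nat.choose k ij.2)
      (fun i _ => Nat.zero_le _) hmem
  calc Nat.choose k t ^ 2 = Nat.choose k t * Nat.choose k t := sq (Nat.choose k t)
    _ ≤ _ := hs
    _ = Nat.choose (k + k) (2*t) := hv.symm
    _ = Nat.choose (2*k) (2*t) := by rw [two_mul k]

lemma central_sq : ∀ k, 1 ≤ k → (3*k+1) * Nat.choose (2*k) k ^ 2 ≤ 16 ^ k := by
  intro k
  induction k with
  | zero => omega
  | succ n ih =>
    intro _
    rcases Nat.eq_zero_or_pos n with rfl | hn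
    · norm_num [Nat.choose]
    · have ihn := ih hn
      have key := Nat.succ_mul_centralBinom_succ n
      rw [Nat.centralBinom_eq_two_mul_choose, Nat.centralBinom_eq_two_mul_choose] at key
      -- (n+1) * C(2(n+1), n+1) = 2*(2n+1)*C(2n,n)
      have hpoly : (3*(n+1)+1) * (4*(2*n+1)^2) ≤ 16 * ((n+1)^2 * (3*n+1)) := by nlinarith
      have expand : (n+1)^2 * ((3*(n+1)+1) * Nat.choose (2*(n+1)) (n+1) ^ 2)
          = (3*(n+1)+1) * ((n+1) * Nat.choose (2*(n+1)) (n+1))^2 := by ring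
      have e2 : (3*(n+1)+1) * ((n+1) * Nat.choose (2*(n+1)) (n+1))^2
          = (3*(n+1)+1) * (4*(2*n+1)^2) * Nat.choose (2*n) n ^2 := by rw [key]; ring
      have : (n+1)^2 * ((3*(n+1)+1) * Nat.choose (2*(n+1)) (n+1) ^ 2)
          ≤ (n+1)^2 * 16^(n+1) := by
        rw [expand, e2]
        calc (3*(n+1)+1) * (4*(2*n+1)^2) * Nat.choose (2*n) n ^2
            ≤ 16 * ((n+1)^2 * (3*n+1)) * Nat.choose (2*n) n ^2 :=
              Nat.mul_le_mul_right _ hpoly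
          _ = 16 * (n+1)^2 * ((3*n+1) * Nat.choose (2*n) n ^2) := by ring
          _ ≤ 16 * (n+1)^2 * 16^n := Nat.mul_le_mul_left _ ihn
          _ = (n+1)^2 * 16^(n+1) := by ring
      exact Nat.le_of_mul_le_mul_left this (by positivity)

lemma third_low : ∀ s, 1 ≤ s → 27 ^ s ≤ 4 ^ s * (3*s) * Nat.choose (3*s) s := by
  intro s
  induction s with
  | zero => omega
  | succ n ih =>
    intro _
    rcases Nat.eq_zero_or_pos n with rfl | hn
    · norm_num [Nat.choose]
    · have ihn := ih hn
      -- chain identities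
      have i1 : (3*n+1) * Nat.choose (3*n) n = Nat.choose (3*n+1) (n+1) * (n+1) := by
        have := Nat.add_one_mul_choose_eq (3*n) n
        simpa [Nat.succ_eq_add_one] using this
      have i2 : (2*n+1) * Nat.choose (3*n+2) (n+1) = (3*n+2) * Nat.choose (3*n+1) (n+1) := by
        have h := top_id (3*n+1) (n+1)
        rw [show 3*n+1+1-(n+1) = 2*n+1 by omega] at h
        rw [show (3*n+1)+1 = 3*n+2 by omega] at h
        exact h
      have i3 : (2*n+2) * Nat.choose (3*n+3) (n+1) = (3*n+3) * Nat.choose (3*n+2) (n+1) := by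
        have h := top_id (3*n+2) (n+1)
        rw [show 3*n+2+1-(n+1) = 2*n+2 by omega] at h
        rw [show (3*n+2)+1 = 3*n+3 by omega] at h
        exact h
      -- P * C(3n+3, n+1) = (3n+1)(3n+2)(3n+3) * C(3n,n), P = (n+1)(2n+1)(2n+2)
      have iP : ((n+1)*(2*n+1)*(2*n+2)) * Nat.choose (3*n+3) (n+1)
          = (3*n+1)*(3*n+2)*(3*n+3) * Nat.choose (3*n) n := by
        calc ((n+1)*(2*n+1)*(2*n+2)) * Nat.choose (3*n+3) (n+1)
            = (n+1)*(2*n+1) * ((2*n+2) * Nat.choose (3*n+3) (n+1)) := by ring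
          _ = (n+1)*(2*n+1) * ((3*n+3) * Nat.choose (3*n+2) (n+1)) := by rw [i3]
          _ = (n+1)*(3*n+3) * ((2*n+1) * Nat.choose (3*n+2) (n+1)) := by ring
          _ = (n+1)*(3*n+3) * ((3*n+2) * Nat.choose (3*n+1) (n+1)) := by rw [i2]
          _ = (3*n+3)*(3*n+2) * (Nat.choose (3*n+1) (n+1) * (n+1)) := by ring
          _ = (3*n+3)*(3*n+2) * ((3*n+1) * Nat.choose (3*n) n) := by rw [← i1]
          _ = _ := by ring
      have hpoly : 81*n*((n+1)*(2*n+1)*(2*n+2)) ≤ 12*(n+1)*((3*n+1)*(3*n+2)*(3*n+3)) := by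
        have h0 : 162*n*(2*n+1) ≤ 36*((3*n+1)*(3*n+2)) := by nlinarith
        calc 81*n*((n+1)*(2*n+1)*(2*n+2)) = (162*n*(2*n+1))*((n+1)*(n+1)) := by ring
          _ ≤ (36*((3*n+1)*(3*n+2)))*((n+1)*(n+1)) := Nat.mul_le_mul_right _ h0
          _ = 12*(n+1)*((3*n+1)*(3*n+2)*(3*n+3)) := by ring
      -- key : 27*(3n)*C(3n,n) ≤ 12*(n+1)*C(3n+3,n+1)
      have key : 27*(3*n) * Nat.choose (3*n) n ≤ 12*(n+1) * Nat.choose (3*n+3) (n+1) := by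
        have hmul : ((n+1)*(2*n+1)*(2*n+2)) * (27*(3*n) * Nat.choose (3*n) n)
            ≤ ((n+1)*(2*n+1)*(2*n+2)) * (12*(n+1) * Nat.choose (3*n+3) (n+1)) := by
          calc ((n+1)*(2*n+1)*(2*n+2)) * (27*(3*n) * Nat.choose (3*n) n)
              = (81*n*((n+1)*(2*n+1)*(2*n+2))) * Nat.choose (3*n) n := by ring
            _ ≤ (12*(n+1)*((3*n+1)*(3*n+2)*(3*n+3))) * Nat.choose (3*n) n :=
                Nat.mul_le_mul_right _ hpoly
            _ = 12*(n+1) * ((3*n+1)*(3*n+2)*(3*n+3) * Nat.choose (3*n) n) := by ring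
            _ = 12*(n+1) * (((n+1)*(2*n+1)*(2*n+2)) * Nat.choose (3*n+3) (n+1)) := by rw [← iP]
            _ = ((n+1)*(2*n+1)*(2*n+2)) * (12*(n+1) * Nat.choose (3*n+3) (n+1)) := by ring
        exact Nat.le_of_mul_le_mul_left hmul (by positivity)
      calc 27^(n+1) = 27 * 27^n := by ring
        _ ≤ 27 * (4^n * (3*n) * Nat.choose (3*n) n) := Nat.mul_le_mul_left _ ihn
        _ = 4^n * (27*(3*n) * Nat.choose (3*n) n) := by ring
        _ ≤ 4^n * (12*(n+1) * Nat.choose (3*n+3) (n+1)) := Nat.mul_le_mul_left _ key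
        _ = 4^(n+1) * (3*(n+1)) * Nat.choose (3*n+3) (n+1) := by ring
        _ = 4^(n+1) * (3*(n+1)) * Nat.choose (3*(n+1)) (n+1) := by
            rw [show 3*(n+1) = 3*n+3 by ring]

lemma top14 (k : ℕ) (hk : 1 ≤ k) : ∀ j, 14^j * Nat.choose (15*k + j) k ≤ 15^j * Nat.choose (15*k) k
  | 0 => by simp
  | (j+1) => by
    have ih := top14 k hk j
    have hstep : 14 * Nat.choose (15*k + j + 1) k ≤ 15 * Nat.choose (15*k + j) k := by
      have h := top_id (15*k + j) k
      have hd : 15*k + j + 1 - k = 14*k + j + 1 := by omega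
      rw [hd] at h
      have hmul : (14*k + j + 1) * (14 * Nat.choose (15*k + j + 1) k)
          ≤ (14*k + j + 1) * (15 * Nat.choose (15*k + j) k) := by
        calc (14*k + j + 1) * (14 * Nat.choose (15*k + j + 1) k)
            = 14 * ((14*k + j + 1) * Nat.choose (15*k + j + 1) k) := by ring
          _ = 14 * ((15*k + j + 1) * Nat.choose (15*k + j) k) := by rw [h]
          _ = (14 * (15*k + j + 1)) * Nat.choose (15*k + j) k := by ring
          _ ≤ ((14*k + j + 1) * 15) * Nat.choose (15*k + j) k :=
              Nat.mul_le_mul_right _ (by omega)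
          _ = (14*k + j + 1) * (15 * Nat.choose (15*k + j) k) := by ring
      exact Nat.le_of_mul_le_mul_left hmul (by omega)
    calc 14^(j+1) * Nat.choose (15*k + (j+1)) k
        = 14^j * (14 * Nat.choose (15*k + j + 1) k) := by
          rw [show 15*k + (j+1) = 15*k + j + 1 by omega]; ring
      _ ≤ 14^j * (15 * Nat.choose (15*k + j) k) := Nat.mul_le_mul_left _ hstep
      _ = 15 * (14^j * Nat.choose (15*k + j) k) := by ring
      _ ≤ 15 * (15^j * Nat.choose (15*k) k) := Nat.mul_le_mul_left _ ih
      _ = 15^(j+1) * Nat.choose (15*k) k := by ring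

lemma powRatio2 {c d A B K : ℕ} (hAB : A ≤ B) (hbase : c * A^K ≤ d * B^K) :
    ∀ n, K ≤ n → c * A^n ≤ d * B^n := by
  intro n hn
  obtain ⟨j, rfl⟩ := Nat.exists_eq_add_of_le hn
  calc c * A^(K+j) = (c * A^K) * A^j := by rw [pow_add]; ring
    _ ≤ (d * B^K) * A^j := Nat.mul_le_mul_right _ hbase
    _ ≤ (d * B^K) * B^j := Nat.mul_le_mul_left _ (Nat.pow_le_pow_left hAB j)
    _ = d * B^(K+j) := by rw [pow_add]; ring

lemma two_eight_nine : ∀ t, 2 * 8^(t+6) ≤ 9^(t+6)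
  | 0 => by norm_num
  | (t+1) => by
    have ih := two_eight_nine t
    calc 2 * 8^(t+1+6) = 8 * (2 * 8^(t+6)) := by rw [show t+1+6 = (t+6)+1 by omega, pow_succ]; ring
      _ ≤ 8 * 9^(t+6) := Nat.mul_le_mul_left _ ih
      _ ≤ 9 * 9^(t+6) := Nat.mul_le_mul_right _ (by norm_num)
      _ = 9^(t+1+6) := by rw [show t+1+6 = (t+6)+1 by omega, pow_succ]; ring

lemma tpow_aux : ∀ s, (s+6) * 8^(s+6) ≤ 4 * 9^(s+6)
  | 0 => by norm_num
  | (s+1) => by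
    have ih := tpow_aux s
    have h2 := two_eight_nine s
    calc (s+1+6) * 8^(s+1+6) = 8 * ((s+6) * 8^(s+6)) + 4 * (2 * 8^(s+6)) := by
          rw [show s+1+6 = (s+6)+1 by omega, pow_succ]; ring
      _ ≤ 8 * (4 * 9^(s+6)) + 4 * 9^(s+6) := Nat.add_le_add (Nat.mul_le_mul_left _ ih) (Nat.mul_le_mul_left _ h2)
      _ = 4 * 9^(s+1+6) := by rw [show s+1+6 = (s+6)+1 by omega, pow_succ]; ring

lemma tpow (t : ℕ) : t * 8^t ≤ 4 * 9^t := by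
  rcases Nat.lt_or_ge t 6 with h | h
  · interval_cases t <;> norm_num
  · obtain ⟨s, rfl⟩ : ∃ s, t = s + 6 := ⟨t - 6, by omega⟩
    exact tpow_aux s


lemma N1 (k c1 c2 : ℕ) (h16 : 16 ≤ k) (h1 : k ≤ 12*c1) (h2 : k ≤ 8*c2 + 7) :
    4 * 560^k * 3^c1 * 7^c2 ≤ 3 * 537^k * 5^c1 * 9^c2 := by
  have hL : (560^24*9*343 : ℕ) ≤ 537^24*25*729 := by norm_num
  have hbase : (4^24*9^21 : ℕ) * (560^24*9*343)^16 ≤ (3^24*7^21) * (537^24*25*729)^16 := by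
    norm_num
  have hcore := powRatio2 hL hbase k h16
  obtain ⟨d1, hd1⟩ : ∃ d, 24*c1 = 2*k + d := ⟨24*c1 - 2*k, by omega⟩
  obtain ⟨d2, hd2⟩ : ∃ d, 24*c2 + 21 = 3*k + d := ⟨24*c2 + 21 - 3*k, by omega⟩
  have hmono : (3:ℕ)^d1 * 7^d2 ≤ 5^d1 * 9^d2 :=
    Nat.mul_le_mul (Nat.pow_le_pow_left (by norm_num) _) (Nat.pow_le_pow_left (by norm_num) _)
  have lhs_eq : (4 * 560^k * 3^c1 * 7^c2)^24 * (7^21*9^21)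
      = ((4^24*9^21) * (560^24*9*343)^k) * (3^d1 * 7^d2) := by
    have e560 : ((560:ℕ)^k)^24 = (560^24)^k := by rw [← pow_mul, ← pow_mul, Nat.mul_comm]
    have e3 : ((3:ℕ)^c1)^24 = 3^(2*k) * 3^d1 := by rw [← pow_mul, ← pow_add, show c1*24 = 2*k+d1 by omega]
    have e7 : ((7:ℕ)^c2)^24 * 7^21 = 7^(3*k) * 7^d2 := by
      rw [← pow_mul, ← pow_add, ← pow_add]; congr 1; omega
    have e9 : ((9:ℕ))^k = 3^(2*k) := by rw [show (9:ℕ) = 3^2 by norm_num, ← pow_mul]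
    have e343 : ((343:ℕ))^k = 7^(3*k) := by rw [show (343:ℕ) = 7^3 by norm_num, ← pow_mul]
    calc (4 * 560^k * 3^c1 * 7^c2)^24 * (7^21*9^21)
        = 4^24 * ((560^k)^24) * ((3^c1)^24) * (((7^c2)^24) * 7^21) * 9^21 := by ring
      _ = 4^24 * (560^24)^k * (3^(2*k) * 3^d1) * (7^(3*k) * 7^d2) * 9^21 := by
          rw [e560, e3, e7]
      _ = ((4^24*9^21) * ((560^24)^k * 9^k * 343^k)) * (3^d1 * 7^d2) := by
          rw [e9, e343]; ring
      _ = ((4^24*9^21) * (560^24*9*343)^k) * (3^d1 * 7^d2) := by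
          rw [mul_pow, mul_pow]
  have rhs_eq : (3 * 537^k * 5^c1 * 9^c2)^24 * (7^21*9^21)
      = ((3^24*7^21) * (537^24*25*729)^k) * (5^d1 * 9^d2) := by
    have e537 : ((537:ℕ)^k)^24 = (537^24)^k := by rw [← pow_mul, ← pow_mul, Nat.mul_comm]
    have e5 : ((5:ℕ)^c1)^24 = 5^(2*k) * 5^d1 := by rw [← pow_mul, ← pow_add, show c1*24 = 2*k+d1 by omega]
    have e9' : ((9:ℕ)^c2)^24 * 9^21 = 9^(3*k) * 9^d2 := by
      rw [← pow_mul, ← pow_add, ← pow_add]; congr 1; omega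
    have e25 : ((25:ℕ))^k = 5^(2*k) := by rw [show (25:ℕ) = 5^2 by norm_num, ← pow_mul]
    have e729 : ((729:ℕ))^k = 9^(3*k) := by rw [show (729:ℕ) = 9^3 by norm_num, ← pow_mul]
    calc (3 * 537^k * 5^c1 * 9^c2)^24 * (7^21*9^21)
        = 3^24 * ((537^k)^24) * ((5^c1)^24) * (((9^c2)^24) * 9^21) * 7^21 := by ring
      _ = 3^24 * (537^24)^k * (5^(2*k) * 5^d1) * (9^(3*k) * 9^d2) * 7^21 := by
          rw [e537, e5, e9']
      _ = ((3^24*7^21) * ((537^24)^k * 25^k * 729^k)) * (5^d1 * 9^d2) := by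
          rw [e25, e729]; ring
      _ = ((3^24*7^21) * (537^24*25*729)^k) * (5^d1 * 9^d2) := by
          rw [mul_pow, mul_pow]
  have main : (4 * 560^k * 3^c1 * 7^c2)^24 * (7^21*9^21)
      ≤ (3 * 537^k * 5^c1 * 9^c2)^24 * (7^21*9^21) := by
    rw [lhs_eq, rhs_eq]
    exact Nat.mul_le_mul hcore hmono
  have h24 : (4 * 560^k * 3^c1 * 7^c2)^24 ≤ (3 * 537^k * 5^c1 * 9^c2)^24 :=
    Nat.le_of_mul_le_mul_right main (by positivity)
  exact (Nat.pow_le_pow_iff_left (by norm_num : (24:ℕ) ≠ 0)).1 h24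

lemma N2 (k t : ℕ) (h1 : 3*t ≤ k) (h2 : k ≤ 3*t+2) (h3 : 9 ≤ t) :
    36*t^2 * 15^(2*k) * 4^(2*t) * 16^k ≤ (3*k+1) * (15^(t+1))^2 * 14^(2*k) * 27^(2*t) := by
  have hb : (839808000000 : ℕ) ≤ 1235032142400 := by norm_num
  have hbase : (24:ℕ) * 839808000000^9 ≤ 1 * 1235032142400^9 := by norm_num
  have hNB := powRatio2 hb hbase t h3
  rw [one_mul] at hNB
  obtain ⟨r, hr, hr2⟩ : ∃ r, k = 3*t + r ∧ r ≤ 2 := ⟨k - 3*t, by omega, by omega⟩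
  -- base conversions
  have c15 : (15:ℕ)^(2*k) = 225^k := by rw [show (225:ℕ) = 15^2 by norm_num, ← pow_mul]
  have c4 : (4:ℕ)^(2*t) = 16^t := by rw [show (16:ℕ) = 4^2 by norm_num, ← pow_mul]
  have c14 : (14:ℕ)^(2*k) = 196^k := by rw [show (196:ℕ) = 14^2 by norm_num, ← pow_mul]
  have c27 : (27:ℕ)^(2*t) = 729^t := by rw [show (729:ℕ) = 27^2 by norm_num, ← pow_mul]
  rw [c15, c4, c14, c27]
  have c225 : ((15:ℕ)^(t+1))^2 = 225^(t+1) := by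
    rw [show (225:ℕ) = 15^2 by norm_num, ← pow_mul, ← pow_mul, Nat.mul_comm]
  rw [c225]
  -- goal : 36*t^2*225^k*16^t*16^k ≤ (3k+1)*225^(t+1)*196^k*729^t
  have S2 : 144 * 3600^k * 18^t ≤ 2025 * 196^k * 164025^t := by
    have e36 : (3600:ℕ)^k = 3600^r * (3600^3)^t := by
      rw [← pow_mul, ← pow_add, hr]; congr 1; omega
    have e196 : (196:ℕ)^k = 196^r * (196^3)^t := by
      rw [← pow_mul, ← pow_add, hr]; congr 1; omega
    have ea : ((3600:ℕ)^3)^t * 18^t = 839808000000^t := by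
      rw [← mul_pow]; norm_num
    have eb : ((196:ℕ)^3)^t * 164025^t = 1235032142400^t := by
      rw [← mul_pow]; norm_num
    have hrcase : (144 * 3600^r : ℕ) ≤ 2025 * 196^r * 24 := by
      interval_cases r <;> norm_num
    calc 144 * 3600^k * 18^t = (144 * 3600^r) * ((3600^3)^t * 18^t) := by rw [e36]; ring
      _ = (144 * 3600^r) * 839808000000^t := by rw [ea]
      _ ≤ (2025 * 196^r * 24) * 839808000000^t := Nat.mul_le_mul_right _ hrcase
      _ = (2025 * 196^r) * (24 * 839808000000^t) := by ring
      _ ≤ (2025 * 196^r) * 1235032142400^t := Nat.mul_le_mul_left _ hNB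
      _ = (2025 * 196^r) * ((196^3)^t * 164025^t) := by rw [eb]
      _ = 2025 * (196^r * (196^3)^t) * 164025^t := by ring
      _ = 2025 * 196^k * 164025^t := by rw [e196]
  have e3600 : (225:ℕ)^k * 16^k = 3600^k := by rw [← mul_pow]; norm_num
  have e164 : (164025:ℕ)^t = 225^t * 729^t := by rw [← mul_pow]; norm_num
  have e16 : (16:ℕ)^t = 8^t * 2^t := by rw [← mul_pow]; norm_num
  have A1 : 36*(t*8^t)*2^t ≤ 144*18^t := by
    calc 36*(t*8^t)*2^t ≤ 36*(4*9^t)*2^t :=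
          Nat.mul_le_mul_right _ (Nat.mul_le_mul_left _ (tpow t))
      _ = 144*(9^t*2^t) := by ring
      _ = 144*18^t := by rw [← mul_pow]; norm_num
  calc 36*t^2*225^k*16^t*16^k
      = (t * (36*(t*8^t)*2^t)) * 3600^k := by rw [← e3600, e16]; ring
    _ ≤ (t * (144*18^t)) * 3600^k := Nat.mul_le_mul_right _ (Nat.mul_le_mul_left _ A1)
    _ = t * (144*3600^k*18^t) := by ring
    _ ≤ t * (2025*196^k*164025^t) := Nat.mul_le_mul_left _ S2
    _ = (9*t) * (225*196^k*164025^t) := by ring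
    _ ≤ (3*k+1) * (225*196^k*164025^t) := Nat.mul_le_mul_right _ (by omega)
    _ = (3*k+1)*225^(t+1)*196^k*729^t := by rw [e164, pow_succ]; ring


lemma lemA (k : ℕ) (hk4 : 4 ≤ k) (hkd : 4 ∣ k) :
    560^k * (∑ j ∈ Finset.range (k/3+1), Nat.choose k j ^ 2) ≤ 537^k * Nat.choose (2*k) k := by
  rcases Nat.lt_or_ge k 16 with hsmall | hlarge
  · have h4_0 : Nat.choose 4 0 = 1 := by rw [Nat.choose_eq_descFactorial_div_factorial]; rfl
    have h4_1 : Nat.choose 4 1 = 4 := by rw [Nat.choose_eq_descFactorial_div_factorial]; rfl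
    have h8_0 : Nat.choose 8 0 = 1 := by rw [Nat.choose_eq_descFactorial_div_factorial]; rfl
    have h8_1 : Nat.choose 8 1 = 8 := by rw [Nat.choose_eq_descFactorial_div_factorial]; rfl
    have h8_2 : Nat.choose 8 2 = 28 := by rw [Nat.choose_eq_descFactorial_div_factorial]; rfl
    have h12_0 : Nat.choose 12 0 = 1 := by rw [Nat.choose_eq_descFactorial_div_factorial]; rfl
    have h12_1 : Nat.choose 12 1 = 12 := by rw [Nat.choose_eq_descFactorial_div_factorial]; rfl
    have h12_2 : Nat.choose 12 2 = 66 := by rw [Nat.choose_eq_descFactorial_div_factorial]; rfl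
    have h12_3 : Nat.choose 12 3 = 220 := by rw [Nat.choose_eq_descFactorial_div_factorial]; rfl
    have h12_4 : Nat.choose 12 4 = 495 := by rw [Nat.choose_eq_descFactorial_div_factorial]; rfl
    have h8_4 : Nat.choose 8 4 = 70 := by rw [Nat.choose_eq_descFactorial_div_factorial]; rfl
    have h16_8 : Nat.choose 16 8 = 12870 := by rw [Nat.choose_eq_descFactorial_div_factorial]; rfl
    have h24_12 : Nat.choose 24 12 = 2704156 := by rw [Nat.choose_eq_descFactorial_div_factorial]; rfl
    have : k = 4 ∨ k = 8 ∨ k = 12 := by omega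
    rcases this with rfl | rfl | rfl
    · norm_num [Finset.sum_range_succ, h4_0, h4_1, h8_4]
    · norm_num [Finset.sum_range_succ, h8_0, h8_1, h8_2, h16_8]
    · norm_num [Finset.sum_range_succ, h12_0, h12_1, h12_2, h12_3, h12_4, h24_12]
  · obtain ⟨u, hu⟩ := hkd
    set t := k/3 with ht
    set c1 := 3*k/4 - 2*t with hc1
    set a2 := 7*k/8 with ha2
    set c2 := a2 - 3*k/4 with hc2
    have h1 := Dsum k t (by omega)
    have h2 := choose_sq_le k t
    have g1 : 5^c1 * Nat.choose (2*k) (2*t) ≤ 3^c1 * Nat.choose (2*k) (2*t + c1) :=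
      gain _ _ _ _ c1 (fun i hi => by omega)
    rw [show 2*t + c1 = 3*u by omega] at g1
    have g2 : 9^c2 * Nat.choose (2*k) (3*u) ≤ 7^c2 * Nat.choose (2*k) (3*u + c2) :=
      gain _ _ _ _ c2 (fun i hi => by omega)
    rw [show 3*u + c2 = a2 by omega] at g2
    have g3 : Nat.choose (2*k) a2 ≤ Nat.choose (2*k) k := by
      have := Nat.choose_le_middle a2 (2*k)
      rwa [show 2*k/2 = k by omega] at this
    have hN1 : 4 * 560^k * 3^c1 * 7^c2 ≤ 3 * 537^k * 5^c1 * 9^c2 :=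
      N1 k c1 c2 hlarge (by omega) (by omega)
    have key : (3 * (5^c1 * 9^c2)) * (560^k * (∑ j ∈ Finset.range (t+1), Nat.choose k j ^ 2))
        ≤ (3 * (5^c1 * 9^c2)) * (537^k * Nat.choose (2*k) k) := by
      calc (3 * (5^c1 * 9^c2)) * (560^k * (∑ j ∈ Finset.range (t+1), Nat.choose k j ^ 2))
          = (560^k * 5^c1 * 9^c2) * (3 * (∑ j ∈ Finset.range (t+1), Nat.choose k j ^ 2)) := by
            ring
        _ ≤ (560^k * 5^c1 * 9^c2) * (4 * Nat.choose k t ^ 2) := Nat.mul_le_mul_left _ h1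
        _ ≤ (560^k * 5^c1 * 9^c2) * (4 * Nat.choose (2*k) (2*t)) :=
            Nat.mul_le_mul_left _ (Nat.mul_le_mul_left _ h2)
        _ = (4 * 560^k * 9^c2) * (5^c1 * Nat.choose (2*k) (2*t)) := by ring
        _ ≤ (4 * 560^k * 9^c2) * (3^c1 * Nat.choose (2*k) (3*u)) := Nat.mul_le_mul_left _ g1
        _ = (4 * 560^k * 3^c1) * (9^c2 * Nat.choose (2*k) (3*u)) := by ring
        _ ≤ (4 * 560^k * 3^c1) * (7^c2 * Nat.choose (2*k) a2) := Nat.mul_le_mul_left _ g2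
        _ = (4 * 560^k * 3^c1 * 7^c2) * Nat.choose (2*k) a2 := by ring
        _ ≤ (4 * 560^k * 3^c1 * 7^c2) * Nat.choose (2*k) k := Nat.mul_le_mul_left _ g3
        _ ≤ (3 * 537^k * 5^c1 * 9^c2) * Nat.choose (2*k) k := Nat.mul_le_mul_right _ hN1
        _ = (3 * (5^c1 * 9^c2)) * (537^k * Nat.choose (2*k) k) := by ring
    exact Nat.le_of_mul_le_mul_left key (by positivity)


lemma lemB (k : ℕ) (hk4 : 4 ≤ k) (hkd : 4 ∣ k) :
    Nat.choose k (k/3+1) * Nat.choose (16*k) (k - (k/3+1)) * Nat.choose (2*k) k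
      ≤ Nat.choose (15*k) k * (∑ j ∈ Finset.range (k/3+1), Nat.choose k j ^ 2) := by
  rcases Nat.lt_or_ge k 28 with hsmall | hlarge
  ·
    have h4_0 : Nat.choose 4 0 = 1 := by rw [Nat.choose_eq_descFactorial_div_factorial]; rfl
    have h4_1 : Nat.choose 4 1 = 4 := by rw [Nat.choose_eq_descFactorial_div_factorial]; rfl
    have h4_2 : Nat.choose 4 2 = 6 := by rw [Nat.choose_eq_descFactorial_div_factorial]; rfl
    have h8_0 : Nat.choose 8 0 = 1 := by rw [Nat.choose_eq_descFactorial_div_factorial]; rfl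
    have h8_1 : Nat.choose 8 1 = 8 := by rw [Nat.choose_eq_descFactorial_div_factorial]; rfl
    have h8_2 : Nat.choose 8 2 = 28 := by rw [Nat.choose_eq_descFactorial_div_factorial]; rfl
    have h8_3 : Nat.choose 8 3 = 56 := by rw [Nat.choose_eq_descFactorial_div_factorial]; rfl
    have h8_4 : Nat.choose 8 4 = 70 := by rw [Nat.choose_eq_descFactorial_div_factorial]; rfl
    have h12_0 : Nat.choose 12 0 = 1 := by rw [Nat.choose_eq_descFactorial_div_factorial]; rfl
    have h12_1 : Nat.choose 12 1 = 12 := by rw [Nat.choose_eq_descFactorial_div_factorial]; rfl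
    have h12_2 : Nat.choose 12 2 = 66 := by rw [Nat.choose_eq_descFactorial_div_factorial]; rfl
    have h12_3 : Nat.choose 12 3 = 220 := by rw [Nat.choose_eq_descFactorial_div_factorial]; rfl
    have h12_4 : Nat.choose 12 4 = 495 := by rw [Nat.choose_eq_descFactorial_div_factorial]; rfl
    have h12_5 : Nat.choose 12 5 = 792 := by rw [Nat.choose_eq_descFactorial_div_factorial]; rfl
    have h16_0 : Nat.choose 16 0 = 1 := by rw [Nat.choose_eq_descFactorial_div_factorial]; rfl
    have h16_1 : Nat.choose 16 1 = 16 := by rw [Nat.choose_eq_descFactorial_div_factorial]; rfl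
    have h16_2 : Nat.choose 16 2 = 120 := by rw [Nat.choose_eq_descFactorial_div_factorial]; rfl
    have h16_3 : Nat.choose 16 3 = 560 := by rw [Nat.choose_eq_descFactorial_div_factorial]; rfl
    have h16_4 : Nat.choose 16 4 = 1820 := by rw [Nat.choose_eq_descFactorial_div_factorial]; rfl
    have h16_5 : Nat.choose 16 5 = 4368 := by rw [Nat.choose_eq_descFactorial_div_factorial]; rfl
    have h16_6 : Nat.choose 16 6 = 8008 := by rw [Nat.choose_eq_descFactorial_div_factorial]; rfl
    have h16_8 : Nat.choose 16 8 = 12870 := by rw [Nat.choose_eq_descFactorial_div_factorial]; rfl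
    have h20_0 : Nat.choose 20 0 = 1 := by rw [Nat.choose_eq_descFactorial_div_factorial]; rfl
    have h20_1 : Nat.choose 20 1 = 20 := by rw [Nat.choose_eq_descFactorial_div_factorial]; rfl
    have h20_2 : Nat.choose 20 2 = 190 := by rw [Nat.choose_eq_descFactorial_div_factorial]; rfl
    have h20_3 : Nat.choose 20 3 = 1140 := by rw [Nat.choose_eq_descFactorial_div_factorial]; rfl
    have h20_4 : Nat.choose 20 4 = 4845 := by rw [Nat.choose_eq_descFactorial_div_factorial]; rfl
    have h20_5 : Nat.choose 20 5 = 15504 := by rw [Nat.choose_eq_descFactorial_div_factorial]; rfl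
    have h20_6 : Nat.choose 20 6 = 38760 := by rw [Nat.choose_eq_descFactorial_div_factorial]; rfl
    have h20_7 : Nat.choose 20 7 = 77520 := by rw [Nat.choose_eq_descFactorial_div_factorial]; rfl
    have h24_0 : Nat.choose 24 0 = 1 := by rw [Nat.choose_eq_descFactorial_div_factorial]; rfl
    have h24_1 : Nat.choose 24 1 = 24 := by rw [Nat.choose_eq_descFactorial_div_factorial]; rfl
    have h24_2 : Nat.choose 24 2 = 276 := by rw [Nat.choose_eq_descFactorial_div_factorial]; rfl
    have h24_3 : Nat.choose 24 3 = 2024 := by rw [Nat.choose_eq_descFactorial_div_factorial]; rfl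
    have h24_4 : Nat.choose 24 4 = 10626 := by rw [Nat.choose_eq_descFactorial_div_factorial]; rfl
    have h24_5 : Nat.choose 24 5 = 42504 := by rw [Nat.choose_eq_descFactorial_div_factorial]; rfl
    have h24_6 : Nat.choose 24 6 = 134596 := by rw [Nat.choose_eq_descFactorial_div_factorial]; rfl
    have h24_7 : Nat.choose 24 7 = 346104 := by rw [Nat.choose_eq_descFactorial_div_factorial]; rfl
    have h24_8 : Nat.choose 24 8 = 735471 := by rw [Nat.choose_eq_descFactorial_div_factorial]; rfl
    have h24_9 : Nat.choose 24 9 = 1307504 := by rw [Nat.choose_eq_descFactorial_div_factorial]; rfl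
    have h24_12 : Nat.choose 24 12 = 2704156 := by rw [Nat.choose_eq_descFactorial_div_factorial]; rfl
    have h32_16 : Nat.choose 32 16 = 601080390 := by rw [Nat.choose_eq_descFactorial_div_factorial]; rfl
    have h40_20 : Nat.choose 40 20 = 137846528820 := by rw [Nat.choose_eq_descFactorial_div_factorial]; rfl
    have h48_24 : Nat.choose 48 24 = 32247603683100 := by rw [Nat.choose_eq_descFactorial_div_factorial]; rfl
    have h60_4 : Nat.choose 60 4 = 487635 := by rw [Nat.choose_eq_descFactorial_div_factorial]; rfl
    have h64_2 : Nat.choose 64 2 = 2016 := by rw [Nat.choose_eq_descFactorial_div_factorial]; rfl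
    have h120_8 : Nat.choose 120 8 = 840261910995 := by rw [Nat.choose_eq_descFactorial_div_factorial]; rfl
    have h128_5 : Nat.choose 128 5 = 264566400 := by rw [Nat.choose_eq_descFactorial_div_factorial]; rfl
    have h180_12 : Nat.choose 180 12 = 1660305826125766950 := by rw [Nat.choose_eq_descFactorial_div_factorial]; rfl
    have h192_7 : Nat.choose 192 7 = 1708566412608 := by rw [Nat.choose_eq_descFactorial_div_factorial]; rfl
    have h240_16 : Nat.choose 240 16 = 3473613070041031545899475 := by rw [Nat.choose_eq_descFactorial_div_factorial]; rfl
    have h256_10 : Nat.choose 256 10 = 278826214642518400 := by rw [Nat.choose_eq_descFactorial_div_factorial]; rfl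
    have h300_20 : Nat.choose 300 20 = 7500433758922134083130376809510 := by rw [Nat.choose_eq_descFactorial_div_factorial]; rfl
    have h320_13 : Nat.choose 320 13 = 46281158546942657504320 := by rw [Nat.choose_eq_descFactorial_div_factorial]; rfl
    have h360_24 : Nat.choose 360 24 = 16523584597687496991338646054778861350 := by rw [Nat.choose_eq_descFactorial_div_factorial]; rfl
    have h384_15 : Nat.choose 384 15 = 337437078754462565786332800 := by rw [Nat.choose_eq_descFactorial_div_factorial]; rfl
    have hk : k = 4 ∨ k = 8 ∨ k = 12 ∨ k = 16 ∨ k = 20 ∨ k = 24 := by omega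
    rcases hk with rfl | rfl | rfl | rfl | rfl | rfl
    · norm_num [Finset.sum_range_succ, h4_0, h4_1, h4_2, h64_2, h8_4, h60_4]
    · norm_num [Finset.sum_range_succ, h8_0, h8_1, h8_2, h8_3, h128_5, h16_8, h120_8]
    · norm_num [Finset.sum_range_succ, h12_0, h12_1, h12_2, h12_3, h12_4, h12_5, h192_7, h24_12, h180_12]
    · norm_num [Finset.sum_range_succ, h16_0, h16_1, h16_2, h16_3, h16_4, h16_5, h16_6, h256_10, h32_16, h240_16]
    · norm_num [Finset.sum_range_succ, h20_0, h20_1, h20_2, h20_3, h20_4, h20_5, h20_6, h20_7, h320_13, h40_20, h300_20]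
    · norm_num [Finset.sum_range_succ, h24_0, h24_1, h24_2, h24_3, h24_4, h24_5, h24_6, h24_7, h24_8, h24_9, h384_15, h48_24, h360_24]
  · set t := k/3 with ht
    have b1 : Nat.choose k (t+1) ≤ 2 * Nat.choose k t := by
      have hid := Nat.choose_succ_right_eq k t
      have hmul : Nat.choose k (t+1) * (t+1) ≤ (2 * Nat.choose k t) * (t+1) := by
        rw [hid]
        calc Nat.choose k t * (k - t) ≤ Nat.choose k t * (2*(t+1)) :=
              Nat.mul_le_mul_left _ (by omega)
          _ = (2 * Nat.choose k t) * (t+1) := by ring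
      exact Nat.le_of_mul_le_mul_right hmul (by omega)
    have b2 : 15^(t+1) * Nat.choose (16*k) (k - (t+1)) ≤ Nat.choose (16*k) k := by
      have h := gain (16*k) 15 1 (k - (t+1)) (t+1) (fun i hi => by omega)
      rwa [one_pow, one_mul, show k - (t+1) + (t+1) = k by omega] at h
    have b3 : 14^k * Nat.choose (16*k) k ≤ 15^k * Nat.choose (15*k) k := by
      have h := top14 k (by omega) k
      rwa [show 15*k + k = 16*k by ring] at h
    have b4 : Nat.choose k t * Nat.choose (3*t) t ≤ ∑ j ∈ Finset.range (t+1), Nat.choose k j ^ 2 := by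
      have h1 : Nat.choose (3*t) t ≤ Nat.choose k t := Nat.choose_le_choose t (by omega)
      have h2 : Nat.choose k t ^ 2 ≤ ∑ j ∈ Finset.range (t+1), Nat.choose k j ^ 2 :=
        Finset.single_le_sum (f := fun j => Nat.choose k j ^ 2)
          (fun i _ => Nat.zero_le _) (Finset.mem_range.2 (by omega))
      calc Nat.choose k t * Nat.choose (3*t) t ≤ Nat.choose k t * Nat.choose k t :=
            Nat.mul_le_mul_left _ h1
        _ = Nat.choose k t ^ 2 := (sq (Nat.choose k t)).symm
        _ ≤ _ := h2
    have b5 := third_low t (by omega)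
    have b6 := central_sq k (by omega)
    have hN2 := N2 k t (by omega) (by omega) (by omega)
    set C2 := Nat.choose (2*k) k with hC2def
    set C16 := Nat.choose (16*k) (k - (t+1)) with hC16def
    have S5 : 2 * 15^k * C2 * (4^t*(3*t)) ≤ 15^(t+1) * 14^k * 27^t := by
      have sq1 : (3*k+1) * (2 * 15^k * C2 * (4^t*(3*t)))^2
          ≤ (3*k+1) * (15^(t+1) * 14^k * 27^t)^2 := by
        calc (3*k+1) * (2 * 15^k * C2 * (4^t*(3*t)))^2
            = (36*t^2 * 15^(2*k) * 4^(2*t)) * ((3*k+1) * C2^2) := by ring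
          _ ≤ (36*t^2 * 15^(2*k) * 4^(2*t)) * 16^k := Nat.mul_le_mul_left _ b6
          _ = 36*t^2 * 15^(2*k) * 4^(2*t) * 16^k := by ring
          _ ≤ (3*k+1) * (15^(t+1))^2 * 14^(2*k) * 27^(2*t) := hN2
          _ = (3*k+1) * (15^(t+1) * 14^k * 27^t)^2 := by ring
      have sq2 : (2 * 15^k * C2 * (4^t*(3*t)))^2 ≤ (15^(t+1) * 14^k * 27^t)^2 :=
        Nat.le_of_mul_le_mul_left sq1 (by omega)
      exact (Nat.pow_le_pow_iff_left (by norm_num : (2:ℕ) ≠ 0)).1 sq2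
    have S4 : 2 * 15^k * C2 ≤ 15^(t+1) * 14^k * Nat.choose (3*t) t := by
      have h : (2 * 15^k * C2) * (4^t*(3*t)) ≤ (15^(t+1) * 14^k * Nat.choose (3*t) t) * (4^t*(3*t)) := by
        calc (2 * 15^k * C2) * (4^t*(3*t)) ≤ 15^(t+1) * 14^k * 27^t := S5
          _ ≤ 15^(t+1) * 14^k * (4^t*(3*t)*Nat.choose (3*t) t) := Nat.mul_le_mul_left _ b5
          _ = (15^(t+1) * 14^k * Nat.choose (3*t) t) * (4^t*(3*t)) := by ring
      exact Nat.le_of_mul_le_mul_right h (by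
        have : 0 < 4^t := Nat.pow_pos (by norm_num)
        have : 0 < 3*t := by omega
        positivity)
    have S2 : 2 * C16 * C2 ≤ Nat.choose (15*k) k * Nat.choose (3*t) t := by
      have hmul : (15^(t+1) * 14^k) * (2 * C16 * C2)
          ≤ (15^(t+1) * 14^k) * (Nat.choose (15*k) k * Nat.choose (3*t) t) := by
        calc (15^(t+1) * 14^k) * (2 * C16 * C2)
            = (2 * C2 * 14^k) * (15^(t+1) * C16) := by ring
          _ ≤ (2 * C2 * 14^k) * Nat.choose (16*k) k := Nat.mul_le_mul_left _ b2
          _ = (2 * C2) * (14^k * Nat.choose (16*k) k) := by ring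
          _ ≤ (2 * C2) * (15^k * Nat.choose (15*k) k) := Nat.mul_le_mul_left _ b3
          _ = (2 * 15^k * C2) * Nat.choose (15*k) k := by ring
          _ ≤ (15^(t+1) * 14^k * Nat.choose (3*t) t) * Nat.choose (15*k) k :=
              Nat.mul_le_mul_right _ S4
          _ = (15^(t+1) * 14^k) * (Nat.choose (15*k) k * Nat.choose (3*t) t) := by ring
      exact Nat.le_of_mul_le_mul_left hmul (by positivity)
    calc Nat.choose k (t+1) * C16 * C2
        ≤ (2 * Nat.choose k t) * C16 * C2 :=
          Nat.mul_le_mul_right _ (Nat.mul_le_mul_right _ b1)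
      _ = Nat.choose k t * (2 * C16 * C2) := by ring
      _ ≤ Nat.choose k t * (Nat.choose (15*k) k * Nat.choose (3*t) t) := Nat.mul_le_mul_left _ S2
      _ = Nat.choose (15*k) k * (Nat.choose k t * Nat.choose (3*t) t) := by ring
      _ ≤ Nat.choose (15*k) k * (∑ j ∈ Finset.range (t+1), Nat.choose k j ^ 2) :=
          Nat.mul_le_mul_left _ b4


end DSTAux

/-- integral lower bound for the paper's DST gap instance. -/
theorem stmt_0 (m : ℕ) (hm : 0 < m) (hdvd : 64 ∣ m)
    (S W : Finset (Finset (Fin m)))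
    (hS : ∀ A ∈ S, A.card = m / 16)
    (hW : ∀ B ∈ W, B.card = m / 8)
    (hi : ∀ B ∈ W, ∃ A ∈ S, A ⊆ B)
    (hii : ∀ C : Finset (Fin m), C.card = m / 16 → ∃ B ∈ W, C ⊆ B) :
    Real.exp (23 * m / 8960) * (Nat.choose m (m / 16)) / (Nat.choose (m / 8) (m / 16)) ≤
      ((Nat.choose (15 * m / 16) (m / 16) : ℝ) / (Nat.choose (m / 8) (m / 16))) * S.card
        + W.card := by
  classical
  obtain ⟨q, hq⟩ := hdvd
  have hq1 : 1 ≤ q := by omega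
  set k := 4*q with hkdef
  have hm16 : m / 16 = k := by omega
  have hm8 : m / 8 = 2*k := by omega
  have hm1516 : 15*m/16 = 15*k := by omega
  have hmk : m = 16*k := by omega
  have hk4 : 4 ≤ k := by omega
  have hkd : 4 ∣ k := ⟨q, hkdef⟩
  rw [hm16, hm8, hm1516]
  set t := k/3 with htdef
  set D := ∑ j ∈ Finset.range (t+1), Nat.choose k j ^ 2 with hDdef
  set E := Nat.choose k (t+1) * Nat.choose m (k - (t+1)) with hEdef
  -- ## combinatorial star inequality
  set T : Finset (Finset (Fin m)) := Finset.powersetCard k Finset.univ with hTdef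
  have hTcard : T.card = Nat.choose m k := by
    rw [hTdef, Finset.card_powersetCard, Finset.card_univ, Fintype.card_fin]
  set F : Finset (Finset (Fin m)) := T.filter (fun C => ∀ A ∈ S, (C ∩ A).card ≤ t) with hFdef
  -- choice of a witness A ⊆ B for B ∈ W
  have hg : ∀ B ∈ W, ∃ A, A ∈ S ∧ A ⊆ B := by
    intro B hB; obtain ⟨A, hA, hAB⟩ := hi B hB; exact ⟨A, hA, hAB⟩
  set g : Finset (Fin m) → Finset (Fin m) :=
    fun B => if h : ∃ A, A ∈ S ∧ A ⊆ B then h.choose else ∅ with hgdef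
  have hgP : ∀ B ∈ W, g B ∈ S ∧ g B ⊆ B := by
    intro B hB
    have hex : ∃ A, A ∈ S ∧ A ⊆ B := hg B hB
    simp only [hgdef, dif_pos hex]
    exact hex.choose_spec
  have claim1 : F.card ≤ W.card * D := by
    have perB : ∀ B ∈ W,
        ((Finset.powersetCard k B).filter (fun C => (C ∩ g B).card ≤ t)).card ≤ D := by
      intro B hB
      obtain ⟨hgS, hgB⟩ := hgP B hB
      have hBcard : B.card = 2*k := by rw [hW B hB, hm8]
      have hAcard : (g B).card = k := by rw [hS _ hgS, hm16]
      have hBA : (B \ g B).card = k := by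
        rw [Finset.card_sdiff_of_subset hgB, hBcard, hAcard]; omega
      have hsub2 : (Finset.powersetCard k B).filter (fun C => (C ∩ g B).card ≤ t) ⊆
          (Finset.range (t+1)).biUnion (fun j =>
            ((Finset.powersetCard j (g B)) ×ˢ (Finset.powersetCard (k - j) (B \ g B))).image
              (fun p => p.1 ∪ p.2)) := by
        intro C hC
        simp only [Finset.mem_filter, Finset.mem_powersetCard] at hC
        obtain ⟨⟨hCB, hCcard⟩, hCt⟩ := hC
        refine Finset.mem_biUnion.2 ⟨(C ∩ g B).card, Finset.mem_range.2 (by omega), ?_⟩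
        refine Finset.mem_image.2 ⟨(C ∩ g B, C \ g B), ?_, ?_⟩
        · refine Finset.mem_product.2 ⟨?_, ?_⟩
          · exact Finset.mem_powersetCard.2 ⟨Finset.inter_subset_right, rfl⟩
          · refine Finset.mem_powersetCard.2 ⟨Finset.sdiff_subset_sdiff hCB (le_refl _), ?_⟩
            show (C \ g B).card = k - (C ∩ g B).card
            have h := Finset.card_inter_add_card_sdiff C (g B)
            omega
        · ext x
          simp only [Finset.mem_union, Finset.mem_inter, Finset.mem_sdiff]
          tauto
      calc ((Finset.powersetCard k B).filter (fun C => (C ∩ g B).card ≤ t)).card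
          ≤ ((Finset.range (t+1)).biUnion (fun j =>
              ((Finset.powersetCard j (g B)) ×ˢ (Finset.powersetCard (k - j) (B \ g B))).image
                (fun p => p.1 ∪ p.2))).card := Finset.card_le_card hsub2
        _ ≤ ∑ j ∈ Finset.range (t+1),
              (((Finset.powersetCard j (g B)) ×ˢ (Finset.powersetCard (k - j) (B \ g B))).image
                (fun p => p.1 ∪ p.2)).card := Finset.card_biUnion_le
        _ ≤ ∑ j ∈ Finset.range (t+1), Nat.choose k j * Nat.choose k (k - j) := by
            refine Finset.sum_le_sum (fun j hj => ?_)
            calc (((Finset.powersetCard j (g B)) ×ˢ (Finset.powersetCard (k - j) (B \ g B))).image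
                  (fun p => p.1 ∪ p.2)).card
                ≤ ((Finset.powersetCard j (g B)) ×ˢ (Finset.powersetCard (k - j) (B \ g B))).card :=
                  Finset.card_image_le
              _ = Nat.choose k j * Nat.choose k (k - j) := by
                  rw [Finset.card_product, Finset.card_powersetCard, Finset.card_powersetCard,
                    hAcard, hBA]
        _ = D := by
            refine Finset.sum_congr rfl (fun j hj => ?_)
            have hjk : j ≤ k := by
              have := Finset.mem_range.1 hj; omega
            rw [Nat.choose_symm hjk, sq]
    have hsub : F ⊆ W.biUnion (fun B =>
        (Finset.powersetCard k B).filter (fun C => (C ∩ g B).card ≤ t)) := by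
      intro C hC
      rw [hFdef, Finset.mem_filter] at hC
      obtain ⟨hCT, hP⟩ := hC
      rw [hTdef, Finset.mem_powersetCard] at hCT
      obtain ⟨-, hCcard⟩ := hCT
      obtain ⟨B, hBW, hCB⟩ := hii C (by rw [hm16]; exact hCcard)
      refine Finset.mem_biUnion.2 ⟨B, hBW, Finset.mem_filter.2
        ⟨Finset.mem_powersetCard.2 ⟨hCB, hCcard⟩, hP _ (hgP B hBW).1⟩⟩
    calc F.card ≤ _ := Finset.card_le_card hsub
      _ ≤ ∑ B ∈ W, ((Finset.powersetCard k B).filter (fun C => (C ∩ g B).card ≤ t)).card :=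
          Finset.card_biUnion_le
      _ ≤ ∑ _B ∈ W, D := Finset.sum_le_sum perB
      _ = W.card * D := by rw [Finset.sum_const, smul_eq_mul]
  have claim2 : T.card ≤ F.card + S.card * E := by
    have perA : ∀ A ∈ S, (T.filter (fun C => t+1 ≤ (C ∩ A).card)).card ≤ E := by
      intro A hA
      have hAcard : A.card = k := by rw [hS _ hA, hm16]
      have hsub2 : T.filter (fun C => t+1 ≤ (C ∩ A).card) ⊆
          ((Finset.powersetCard (t+1) A) ×ˢ
            (Finset.powersetCard (k - (t+1)) (Finset.univ : Finset (Fin m)))).image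
            (fun p => p.1 ∪ p.2) := by
        intro C hC
        rw [Finset.mem_filter] at hC
        obtain ⟨hCT, hCt⟩ := hC
        rw [hTdef, Finset.mem_powersetCard] at hCT
        obtain ⟨-, hCcard⟩ := hCT
        obtain ⟨P, hPsub, hPcard⟩ := Finset.exists_subset_card_eq hCt
        refine Finset.mem_image.2 ⟨(P, C \ P), Finset.mem_product.2 ⟨?_, ?_⟩, ?_⟩
        · exact Finset.mem_powersetCard.2 ⟨hPsub.trans Finset.inter_subset_right, hPcard⟩
        · refine Finset.mem_powersetCard.2 ⟨Finset.subset_univ _, ?_⟩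
          rw [Finset.card_sdiff_of_subset (hPsub.trans Finset.inter_subset_left), hCcard, hPcard]
        · exact Finset.union_sdiff_of_subset (hPsub.trans Finset.inter_subset_left)
      calc (T.filter (fun C => t+1 ≤ (C ∩ A).card)).card
          ≤ _ := Finset.card_le_card hsub2
        _ ≤ ((Finset.powersetCard (t+1) A) ×ˢ
              (Finset.powersetCard (k - (t+1)) (Finset.univ : Finset (Fin m)))).card :=
            Finset.card_image_le
        _ = E := by
            rw [Finset.card_product, Finset.card_powersetCard, Finset.card_powersetCard,
              hAcard, Finset.card_univ, Fintype.card_fin]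
    have hsub : T ⊆ F ∪ S.biUnion (fun A => T.filter (fun C => t+1 ≤ (C ∩ A).card)) := by
      intro C hC
      by_cases h : ∀ A ∈ S, (C ∩ A).card ≤ t
      · exact Finset.mem_union_left _ (Finset.mem_filter.2 ⟨hC, h⟩)
      · push_neg at h
        obtain ⟨A, hA, hlt⟩ := h
        exact Finset.mem_union_right _ (Finset.mem_biUnion.2
          ⟨A, hA, Finset.mem_filter.2 ⟨hC, by omega⟩⟩)
    calc T.card ≤ (F ∪ S.biUnion (fun A => T.filter (fun C => t+1 ≤ (C ∩ A).card))).card :=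
          Finset.card_le_card hsub
      _ ≤ F.card + (S.biUnion (fun A => T.filter (fun C => t+1 ≤ (C ∩ A).card))).card :=
          Finset.card_union_le _ _
      _ ≤ F.card + ∑ A ∈ S, (T.filter (fun C => t+1 ≤ (C ∩ A).card)).card :=
          Nat.add_le_add_left Finset.card_biUnion_le _
      _ ≤ F.card + ∑ A ∈ S, E := Nat.add_le_add_left (Finset.sum_le_sum perA) _
      _ = F.card + S.card * E := by rw [Finset.sum_const, smul_eq_mul]
  have hstar : Nat.choose m k ≤ W.card * D + S.card * E := by
    calc Nat.choose m k = T.card := hTcard.symm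
      _ ≤ F.card + S.card * E := claim2
      _ ≤ W.card * D + S.card * E := Nat.add_le_add_right claim1 _
  -- ## real glue
  set α := Real.exp (23 * m / 8960) with hαdef
  have hαpos : 0 < α := Real.exp_pos _
  have hexp1 : Real.exp ((23:ℝ)/560) ≤ 560/537 := by
    have h := Real.add_one_le_exp (-(23/560) : ℝ)
    have h2 : (537/560 : ℝ) ≤ Real.exp (-(23/560)) := by linarith
    calc Real.exp ((23:ℝ)/560) = (Real.exp (-(23/560)))⁻¹ := by
          rw [Real.exp_neg, inv_inv]
      _ ≤ ((537:ℝ)/560)⁻¹ := by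
          apply inv_anti₀ (by norm_num) h2
      _ = 560/537 := by norm_num
  have hαle : α ≤ ((560:ℝ)/537)^k := by
    have he : (23 * (m:ℝ) / 8960) = (k:ℝ) * (23/560) := by
      rw [hmk]; push_cast; ring
    rw [hαdef, he, Real.exp_nat_mul]
    exact pow_le_pow_left₀ (le_of_lt (Real.exp_pos _)) hexp1 k
  have hC2pos : (0:ℝ) < ((Nat.choose (2*k) k : ℕ) : ℝ) := by
    exact_mod_cast Nat.choose_pos (by omega)
  have hDpos : (0:ℝ) < ((D:ℕ) : ℝ) := by
    have h1 : (1:ℕ) ≤ D := by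
      rw [hDdef]
      calc (1:ℕ) = Nat.choose k 0 ^ 2 := by simp
        _ ≤ ∑ j ∈ Finset.range (t+1), Nat.choose k j ^ 2 :=
          Finset.single_le_sum (f := fun j => Nat.choose k j ^ 2)
            (fun i _ => Nat.zero_le _) (Finset.mem_range.2 (by omega))
    exact_mod_cast h1
  have hAreal : α * D ≤ ((Nat.choose (2*k) k : ℕ) : ℝ) := by
    have hN := DSTAux.lemA k hk4 hkd
    have hcast : (560:ℝ)^k * D ≤ 537^k * ((Nat.choose (2*k) k : ℕ) : ℝ) := by
      exact_mod_cast hN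
    have h537 : (0:ℝ) < 537^k := by positivity
    calc α * D ≤ ((560:ℝ)/537)^k * D := by
          apply mul_le_mul_of_nonneg_right hαle (by positivity)
      _ ≤ _ := by
          rw [div_pow, div_mul_eq_mul_div, div_le_iff₀ h537]
          calc (560:ℝ)^k * D ≤ 537^k * ((Nat.choose (2*k) k : ℕ) : ℝ) := hcast
            _ = ((Nat.choose (2*k) k : ℕ) : ℝ) * 537^k := by ring
  have hBreal : (E:ℝ) * ((Nat.choose (2*k) k : ℕ) : ℝ) ≤ ((Nat.choose (15*k) k : ℕ) : ℝ) * D := by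
    have hN := DSTAux.lemB k hk4 hkd
    have hE16 : E = Nat.choose k (t+1) * Nat.choose (16*k) (k - (t+1)) := by
      rw [hEdef, hmk]
    have : E * Nat.choose (2*k) k ≤ Nat.choose (15*k) k * D := by
      rw [hE16, hDdef]; exact hN
    exact_mod_cast this
  have hstarreal : ((Nat.choose m k : ℕ) : ℝ) ≤ (W.card : ℝ) * D + (S.card : ℝ) * E := by
    exact_mod_cast hstar
  -- conclude
  have hwx : (0:ℝ) ≤ (W.card : ℝ) := Nat.cast_nonneg _
  have hsx : (0:ℝ) ≤ (S.card : ℝ) := Nat.cast_nonneg _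
  have hEnn : (0:ℝ) ≤ (E : ℝ) := Nat.cast_nonneg _
  have hαE : α * E ≤ ((Nat.choose (15*k) k : ℕ) : ℝ) := by
    have h3 : (α * E) * D ≤ ((Nat.choose (15*k) k : ℕ) : ℝ) * D := by
      calc (α * E) * D = (α * D) * E := by ring
        _ ≤ ((Nat.choose (2*k) k : ℕ) : ℝ) * E := mul_le_mul_of_nonneg_right hAreal hEnn
        _ = (E:ℝ) * ((Nat.choose (2*k) k : ℕ) : ℝ) := by ring
        _ ≤ ((Nat.choose (15*k) k : ℕ) : ℝ) * D := hBreal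
    exact le_of_mul_le_mul_right h3 hDpos
  have key : α * ((Nat.choose m k : ℕ) : ℝ) ≤
      ((Nat.choose (15*k) k : ℕ) : ℝ) * S.card + (W.card : ℝ) * ((Nat.choose (2*k) k : ℕ) : ℝ) := by
    calc α * ((Nat.choose m k : ℕ) : ℝ)
        ≤ α * ((W.card : ℝ) * D + (S.card : ℝ) * E) :=
          mul_le_mul_of_nonneg_left hstarreal (le_of_lt hαpos)
      _ = (W.card : ℝ) * (α * D) + (S.card : ℝ) * (α * E) := by ring
      _ ≤ (W.card : ℝ) * ((Nat.choose (2*k) k : ℕ) : ℝ) + (S.card : ℝ) * ((Nat.choose (15*k) k : ℕ) : ℝ) := by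
          apply add_le_add
          · exact mul_le_mul_of_nonneg_left hAreal hwx
          · exact mul_le_mul_of_nonneg_left hαE hsx
      _ = _ := by ring
  rw [div_le_iff₀ hC2pos]
  calc α * ((Nat.choose m k : ℕ) : ℝ)
      ≤ ((Nat.choose (15*k) k : ℕ) : ℝ) * S.card + (W.card : ℝ) * ((Nat.choose (2*k) k : ℕ) : ℝ) := key
    _ = (((Nat.choose (15*k) k : ℕ) : ℝ) / ((Nat.choose (2*k) k : ℕ) : ℝ) * S.card + W.card) *
        ((Nat.choose (2*k) k : ℕ) : ℝ) := by
        field_simp
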